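/- Let S be a nonempty set (the feasible set), K a nonempty finite index set, and for each k ∈ K let f_k, g_k : S → ℝ be functions with g_k(x) > 0 for every x ∈ S and k ∈ K. For x ∈ S write η(x) = min_{k∈K} f_k(x)/g_k(x). Suppose x* ∈ S maximizes η over S, and set η* = η(x*). Then min_{k∈K}(f_k(x*) − η*·g_k(x*)) = 0 and, for every x ∈ S, min_{k∈K}(f_k(x) − η*·g_k(x)) ≤ 0; hence x* maximizes x ↦ min_{k∈K}(f_k(x) − η*·g_k(x)) over S. -/
import Mathlib


/-- Sufficiency direction of Theorem 4 (Dinkelbach optimality for max-min fractional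
programming): if `x*` maximizes `η(x) = min_k f_k(x)/g_k(x)` over `S` with optimal value
`η* = η(x*)`, then `min_k (f_k(x*) − η*·g_k(x*)) = 0` and `min_k (f_k(x) − η*·g_k(x)) ≤ 0`
for all `x ∈ S`; hence `x*` maximizes the parametric objective. -/
theorem dinkelbach_sufficiency
    {S K : Type*} [Nonempty S] [Fintype K] [Nonempty K]
    (f g : K → S → ℝ) (hg : ∀ k x, 0 < g k x)
    (η : S → ℝ)
    (hη : ∀ x, η x = Finset.univ.inf' Finset.univ_nonempty (fun k => f k x / g k x))
    (xstar : S) (hmax : ∀ x : S, η x ≤ η xstar) :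
    Finset.univ.inf' Finset.univ_nonempty
        (fun k => f k xstar - η xstar * g k xstar) = 0 ∧
      ∀ x : S,
        Finset.univ.inf' Finset.univ_nonempty (fun k => f k x - η xstar * g k x) ≤ 0 := by
  have key : ∀ x : S, ∃ k : K, f k x / g k x = η x := by
    intro x
    obtain ⟨k, -, hk⟩ := Finset.exists_mem_eq_inf' (Finset.univ_nonempty (α := K))
      (fun k => f k x / g k x)
    exact ⟨k, by rw [hη x, hk]⟩
  have hle : ∀ (x : S) (k : K), η x ≤ f k x / g k x := by
    intro x k
    rw [hη x]
    exact Finset.inf'_le _ (Finset.mem_univ k)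
  constructor
  · apply le_antisymm
    · obtain ⟨k, hk⟩ := key xstar
      refine le_trans (Finset.inf'_le _ (Finset.mem_univ k)) ?_
      have hgpos := hg k xstar
      have : f k xstar = η xstar * g k xstar := by
        field_simp at hk; linarith [hk]
      simp [this]
    · apply Finset.le_inf'
      intro k _
      have := hle xstar k
      have hgpos := hg k xstar
      rw [le_div_iff₀ hgpos] at this
      linarith
  · intro x
    obtain ⟨k, hk⟩ := key x
    refine le_trans (Finset.inf'_le _ (Finset.mem_univ k)) ?_
    have hgpos := hg k x
    have h1 : f k x = η x * g k x := by field_simp at hk; linarith [hk]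
    have := hmax x
    nlinarith
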